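/- Let I ⊆ [2n] be a subset of even cardinality with |I| ≥ n. Then every I-compatible diagram is min(I,Ī)-compatible; that is, D(I) ⊆ D(min(I,Ī)). -/

import Mathlib

open scoped Classical
noncomputable section

def IsTL (n : ℕ) (D : Finset (ℕ × ℕ)) : Prop :=
  (∀ p ∈ D, 1 ≤ p.1 ∧ p.1 < p.2 ∧ p.2 ≤ 2 * n) ∧
  (∀ p ∈ D, ∀ q ∈ D, p ≠ q → p.1 ≠ q.1 ∧ p.1 ≠ q.2 ∧ p.2 ≠ q.1 ∧ p.2 ≠ q.2) ∧
  (∀ p ∈ D, ∀ q ∈ D, ¬(p.1 < q.1 ∧ q.1 < p.2 ∧ p.2 < q.2)) ∧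
  (∀ p ∈ D, ∀ k, p.1 < k → k < p.2 → ∃ q ∈ D, k = q.1 ∨ k = q.2)

def Compat (I : Finset ℕ) (D : Finset (ℕ × ℕ)) : Prop :=
  ∀ p ∈ D, (p.1 ∈ I ∧ p.2 ∉ I) ∨ (p.1 ∉ I ∧ p.2 ∈ I)

def minSet (n : ℕ) (I : Finset ℕ) : Finset ℕ :=
  (Finset.range I.card).image fun t =>
    if t < (Finset.Icc 1 (2 * n) \ I).card then
      min ((I.sort (· ≤ ·)).getD t 0) (((Finset.Icc 1 (2 * n) \ I).sort (· ≤ ·)).getD t 0)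
    else (I.sort (· ≤ ·)).getD t 0

namespace TLAux

def cnt (S : Finset ℕ) (x : ℕ) : ℕ := (S.filter (· < x)).card

lemma cnt_le_card (S : Finset ℕ) (x : ℕ) : cnt S x ≤ S.card :=
  Finset.card_filter_le _ _

lemma cnt_strict_mono (S : Finset ℕ) {a b : ℕ} (ha : a ∈ S) (hab : a < b) :
    cnt S a < cnt S b := by
  have hsub : insert a (S.filter (· < a)) ⊆ S.filter (· < b) := by
    intro y hy
    rcases Finset.mem_insert.mp hy with rfl | hy
    · exact Finset.mem_filter.2 ⟨ha, hab⟩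
    · simp only [Finset.mem_filter] at hy ⊢; exact ⟨hy.1, by omega⟩
  have h2 := Finset.card_le_card hsub
  rw [Finset.card_insert_of_notMem (by simp [Finset.mem_filter])] at h2
  unfold cnt at *; omega

lemma sort_mem (S : Finset ℕ) (t : ℕ) (ht : t < S.card) :
    (S.sort (· ≤ ·)).getD t 0 ∈ S := by
  have h : t < (S.sort (· ≤ ·)).length := by rwa [Finset.length_sort]
  rw [List.getD_eq_getElem _ _ h]
  exact (Finset.mem_sort _).1 (List.getElem_mem h)

lemma cnt_sort (S : Finset ℕ) (t : ℕ) (ht : t < S.card) :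
    cnt S ((S.sort (· ≤ ·)).getD t 0) = t := by
  set L := S.sort (· ≤ ·) with hL
  have hlen : L.length = S.card := Finset.length_sort _
  have ht' : t < L.length := by omega
  have hsort : L.Pairwise (· < ·) := (Finset.sortedLT_sort S).pairwise
  have hnd : L.Nodup := S.sort_nodup _
  have hmono : ∀ i j (hi : i < L.length) (hj : j < L.length), i < j → L[i] < L[j] :=
    fun i j hi hj hij => List.pairwise_iff_getElem.mp hsort i j hi hj hij
  rw [List.getD_eq_getElem _ _ ht']
  have hset : S.filter (· < L[t]) = (L.take t).toFinset := by
    ext y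
    simp only [Finset.mem_filter, List.mem_toFinset, List.mem_take_iff_getElem]
    constructor
    · rintro ⟨hyS, hylt⟩
      have hyL : y ∈ L := (Finset.mem_sort _).2 hyS
      obtain ⟨i, hi, rfl⟩ := List.mem_iff_getElem.mp hyL
      have hit : i < t := by
        by_contra h
        push_neg at h
        rcases eq_or_lt_of_le h with h' | h'
        · subst h'; exact lt_irrefl _ hylt
        · exact absurd (hmono t i ht' hi h') (by omega)
      exact ⟨i, by omega, rfl⟩
    · rintro ⟨i, him, rfl⟩
      have hit : i < t := by omega
      have hi : i < L.length := by omega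
      exact ⟨(Finset.mem_sort _).1 (List.getElem_mem hi), hmono i t hi ht' hit⟩
  rw [cnt, hset, List.toFinset_card_of_nodup (hnd.sublist (List.take_sublist _ _)),
    List.length_take]
  omega

lemma sort_cnt (S : Finset ℕ) (x : ℕ) (hx : x ∈ S) :
    cnt S x < S.card ∧ (S.sort (· ≤ ·)).getD (cnt S x) 0 = x := by
  have hsub : S.filter (· < x) ⊆ S.erase x := by
    intro y hy
    simp only [Finset.mem_filter] at hy
    exact Finset.mem_erase.2 ⟨by omega, hy.1⟩
  have hlt : cnt S x < S.card := by
    have := Finset.card_le_card hsub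
    have := Finset.card_erase_of_mem hx
    have := Finset.card_pos.2 ⟨x, hx⟩
    unfold cnt at *; omega
  refine ⟨hlt, ?_⟩
  set z := (S.sort (· ≤ ·)).getD (cnt S x) 0 with hz
  have hzS : z ∈ S := sort_mem S _ hlt
  have hzc : cnt S z = cnt S x := cnt_sort S _ hlt
  rcases lt_trichotomy z x with h | h | h
  · have := cnt_strict_mono S hzS h; omega
  · exact h
  · have := cnt_strict_mono S hx h; omega

lemma mem_minSet_iff (n : ℕ) (I : Finset ℕ) (hI : I ⊆ Finset.Icc 1 (2 * n))
    (hbig : n ≤ I.card) (x : ℕ) :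
    x ∈ minSet n I ↔
      ((x ∈ I ∧ cnt (Finset.Icc 1 (2 * n) \ I) x ≤ cnt I x) ∨
       (x ∈ Finset.Icc 1 (2 * n) \ I ∧ cnt I x ≤ cnt (Finset.Icc 1 (2 * n) \ I) x)) := by
  set J := Finset.Icc 1 (2 * n) \ I with hJdef
  have hJcard : J.card = 2 * n - I.card := by
    rw [hJdef, Finset.card_sdiff_of_subset hI, Nat.card_Icc]
    omega
  have hIcard : I.card ≤ 2 * n := by
    have := Finset.card_le_card hI
    rwa [Nat.card_Icc] at this
  have hrk : J.card ≤ I.card := by omega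
  have hdisj : ∀ y, y ∈ J → y ∉ I := by
    intro y hy; exact (Finset.mem_sdiff.mp hy).2
  constructor
  · intro hx
    obtain ⟨t, ht, hval⟩ := Finset.mem_image.mp hx
    rw [Finset.mem_range] at ht
    by_cases htr : t < J.card
    · rw [if_pos htr] at hval
      set a := (I.sort (· ≤ ·)).getD t 0 with ha
      set b := (J.sort (· ≤ ·)).getD t 0 with hb
      have haI : a ∈ I := sort_mem I t ht
      have hbJ : b ∈ J := sort_mem J t htr
      have hca : cnt I a = t := cnt_sort I t ht
      have hcb : cnt J b = t := cnt_sort J t htr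
      have hab : a ≠ b := fun h => hdisj b hbJ (h ▸ haI)
      rcases lt_or_gt_of_ne hab with h | h
      · have hxa : x = a := by rw [← hval]; exact min_eq_left h.le
        subst hxa
        refine Or.inl ⟨haI, ?_⟩
        have : cnt J a ≤ cnt J b := by
          apply Finset.card_le_card
          intro y hy
          simp only [Finset.mem_filter] at hy ⊢
          exact ⟨hy.1, by omega⟩
        omega
      · have hxb : x = b := by rw [← hval]; exact min_eq_right h.le
        subst hxb
        refine Or.inr ⟨hbJ, ?_⟩
        have : cnt I b ≤ cnt I a := by
          apply Finset.card_le_card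
          intro y hy
          simp only [Finset.mem_filter] at hy ⊢
          exact ⟨hy.1, by omega⟩
        omega
    · rw [if_neg htr] at hval
      have haI : x ∈ I := hval ▸ sort_mem I t ht
      have hca : cnt I x = t := hval ▸ cnt_sort I t ht
      have := cnt_le_card J x
      exact Or.inl ⟨haI, by omega⟩
  · rintro (⟨hxI, hle⟩ | ⟨hxJ, hle⟩)
    · obtain ⟨ht, hval⟩ := sort_cnt I x hxI
      set t := cnt I x with htdef
      refine Finset.mem_image.mpr ⟨t, Finset.mem_range.mpr ht, ?_⟩
      by_cases htr : t < J.card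
      · rw [if_pos htr, hval]
        set b := (J.sort (· ≤ ·)).getD t 0 with hb
        have hbJ : b ∈ J := sort_mem J t htr
        have hcb : cnt J b = t := cnt_sort J t htr
        have hxb : x ≤ b := by
          by_contra h
          push_neg at h
          have := cnt_strict_mono J hbJ h
          omega
        exact min_eq_left hxb
      · rw [if_neg htr, hval]
    · obtain ⟨ht, hval⟩ := sort_cnt J x hxJ
      set t := cnt J x with htdef
      refine Finset.mem_image.mpr ⟨t, Finset.mem_range.mpr (by omega), ?_⟩
      rw [if_pos ht, hval]
      set a := (I.sort (· ≤ ·)).getD t 0 with ha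
      have haI : a ∈ I := sort_mem I t (by omega)
      have hca : cnt I a = t := cnt_sort I t (by omega)
      have hxa : x ≤ a := by
        by_contra h
        push_neg at h
        have := cnt_strict_mono I haI h
        omega
      exact min_eq_right hxa

lemma count_split (S : Finset ℕ) (a b : ℕ) (hab : a < b) :
    cnt S b = cnt S a + ((Finset.Ioo a b).filter (· ∈ S)).card
      + (if a ∈ S then 1 else 0) := by
  have h1 : S.filter (· < b) = S.filter (· < a + 1) ∪ (Finset.Ioo a b).filter (· ∈ S) := by
    ext y
    simp only [Finset.mem_filter, Finset.mem_union, Finset.mem_Ioo]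
    by_cases hy : y ∈ S <;> simp [hy] <;> omega
  have hdisj : Disjoint (S.filter (· < a + 1)) ((Finset.Ioo a b).filter (· ∈ S)) := by
    rw [Finset.disjoint_left]
    intro y hy1 hy2
    simp only [Finset.mem_filter, Finset.mem_Ioo] at hy1 hy2
    omega
  have h2 : cnt S b = cnt S (a + 1) + ((Finset.Ioo a b).filter (· ∈ S)).card := by
    rw [cnt, h1, Finset.card_union_of_disjoint hdisj]; rfl
  have h3 : cnt S (a + 1) = cnt S a + (if a ∈ S then 1 else 0) := by
    by_cases ha : a ∈ S
    · rw [if_pos ha]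
      have : S.filter (· < a + 1) = insert a (S.filter (· < a)) := by
        ext y
        simp only [Finset.mem_filter, Finset.mem_insert]
        constructor
        · rintro ⟨hyS, hlt⟩
          rcases Nat.lt_succ_iff_lt_or_eq.mp hlt with h | h
          · exact Or.inr ⟨hyS, h⟩
          · exact Or.inl h
        · rintro (rfl | ⟨hyS, hlt⟩)
          · exact ⟨ha, by omega⟩
          · exact ⟨hyS, by omega⟩
      rw [cnt, this, Finset.card_insert_of_notMem (by simp [Finset.mem_filter])]
      rfl
    · rw [if_neg ha]
      have : S.filter (· < a + 1) = S.filter (· < a) := by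
        ext y
        simp only [Finset.mem_filter]
        by_cases hy : y ∈ S <;> simp [hy]
        constructor <;> intro h
        · rcases Nat.lt_succ_iff_lt_or_eq.mp (Nat.lt_succ_of_le h) with h' | rfl
          · exact h'
          · exact absurd hy ha
        · omega
      rw [cnt, this]; rfl
  omega

lemma pair_balance (n : ℕ) (D : Finset (ℕ × ℕ)) (hD : IsTL n D) (I : Finset ℕ)
    (hI : I ⊆ Finset.Icc 1 (2 * n)) (hc : Compat I D) (p : ℕ × ℕ) (hp : p ∈ D) :
    ((Finset.Ioo p.1 p.2).filter (· ∈ I)).card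
      = ((Finset.Ioo p.1 p.2).filter (· ∈ Finset.Icc 1 (2 * n) \ I)).card := by
  obtain ⟨hb, hdis, hcross, hcov⟩ := hD
  set E : ℕ → ℕ → Prop := fun x y => ∃ q ∈ D, q = (x, y) ∨ q = (y, x) with hE
  have hEsymm : ∀ x y, E x y → E y x := by
    rintro x y ⟨q, hq, h | h⟩
    · exact ⟨q, hq, Or.inr h⟩
    · exact ⟨q, hq, Or.inl h⟩
  have huniq : ∀ q ∈ D, ∀ q' ∈ D, ∀ x : ℕ, (x = q.1 ∨ x = q.2) →
      (x = q'.1 ∨ x = q'.2) → q = q' := by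
    intro q hq q' hq' x h h'
    by_contra hne
    have := hdis q hq q' hq' hne
    rcases h with rfl | h <;> rcases h' with h' | h' <;> omega
  have hEuniq : ∀ x y y', E x y → E x y' → y = y' := by
    rintro x y y' ⟨q, hq, hxy⟩ ⟨q', hq', hxy'⟩
    have hqq : q = q' := by
      apply huniq q hq q' hq' x
      · rcases hxy with rfl | rfl <;> simp
      · rcases hxy' with rfl | rfl <;> simp
    subst hqq
    rcases hxy with rfl | rfl <;>
      [skip; skip] <;>
      · have hbq := hb _ hq
        rcases hxy' with h | h <;> simp only [Prod.mk.injEq, Prod.fst, Prod.snd] at h hbq ⊢ <;>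
          omega
  have hEI : ∀ x y, E x y → x ∈ I → y ∉ I := by
    rintro x y ⟨q, hq, rfl | rfl⟩ hx <;> rcases hc _ hq with ⟨h1, h2⟩ | ⟨h1, h2⟩ <;>
      simp only at h1 h2 <;> tauto
  have hEIcc : ∀ x y, E x y → y ∈ Finset.Icc 1 (2 * n) := by
    rintro x y ⟨q, hq, rfl | rfl⟩ <;> have hbq := hb _ hq <;>
      simp only at hbq <;> rw [Finset.mem_Icc] <;> omega
  have hEI' : ∀ x y, E x y → x ∉ I → y ∈ I := by
    intro x y h hx
    by_contra hy
    obtain ⟨q, hq, hh⟩ := h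
    rcases hc _ hq with ⟨h1, h2⟩ | ⟨h1, h2⟩ <;> rcases hh with rfl | rfl <;>
      simp only at h1 h2 <;> tauto
  have main : ∀ x ∈ Finset.Ioo p.1 p.2, ∃ y ∈ Finset.Ioo p.1 p.2, E x y := by
    intro x hx
    rw [Finset.mem_Ioo] at hx
    obtain ⟨q, hq, hxq⟩ := hcov p hp x hx.1 hx.2
    have hq1 := hb q hq
    rcases hxq with h1 | h2
    · have hqp : q ≠ p := by
        intro h; subst h; omega
      have hne := hdis q hq p hp hqp
      have hcr := hcross p hp q hq
      refine ⟨q.2, ?_, q, hq, Or.inl ?_⟩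
      · rw [Finset.mem_Ioo]
        constructor
        · omega
        · by_contra h
          push_neg at h
          exact hcr ⟨by omega, by omega, by omega⟩
      · exact Prod.ext_iff.mpr ⟨h1.symm, rfl⟩
    · have hqp : q ≠ p := by
        intro h; subst h; omega
      have hne := hdis q hq p hp hqp
      have hcr := hcross q hq p hp
      refine ⟨q.1, ?_, q, hq, Or.inr ?_⟩
      · rw [Finset.mem_Ioo]
        constructor
        · by_contra h
          push_neg at h
          exact hcr ⟨by omega, by omega, by omega⟩
        · omega
      · exact Prod.ext_iff.mpr ⟨rfl, h2.symm⟩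
  choose F hF1 hF2 using main
  refine Finset.card_bij'
    (fun x hx => F x (Finset.mem_filter.mp hx).1)
    (fun y hy => F y (Finset.mem_filter.mp hy).1)
    ?_ ?_ ?_ ?_
  · intro x hx
    obtain ⟨hxIoo, hxI⟩ := Finset.mem_filter.mp hx
    refine Finset.mem_filter.mpr ⟨hF1 x hxIoo, Finset.mem_sdiff.mpr
      ⟨hEIcc x _ (hF2 x hxIoo), hEI x _ (hF2 x hxIoo) hxI⟩⟩
  · intro y hy
    obtain ⟨hyIoo, hyJ⟩ := Finset.mem_filter.mp hy
    have hyI : y ∉ I := (Finset.mem_sdiff.mp hyJ).2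
    exact Finset.mem_filter.mpr ⟨hF1 y hyIoo, hEI' y _ (hF2 y hyIoo) hyI⟩
  · intro x hx
    obtain ⟨hxIoo, hxI⟩ := Finset.mem_filter.mp hx
    exact hEuniq _ _ _ (hF2 _ (hF1 x hxIoo)) (hEsymm _ _ (hF2 x hxIoo))
  · intro y hy
    obtain ⟨hyIoo, hyJ⟩ := Finset.mem_filter.mp hy
    exact hEuniq _ _ _ (hF2 _ (hF1 y hyIoo)) (hEsymm _ _ (hF2 y hyIoo))

end TLAux

theorem compat_minSet (n : ℕ) (I : Finset ℕ) (hI : I ⊆ Finset.Icc 1 (2 * n))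
    (heven : Even I.card) (hbig : n ≤ I.card) (D : Finset (ℕ × ℕ)) (hD : IsTL n D)
    (hc : Compat I D) : Compat (minSet n I) D := by
  intro p hp
  set J := Finset.Icc 1 (2 * n) \ I with hJdef
  have hbounds := hD.1 p hp
  have hbal := TLAux.pair_balance n D hD I hI hc p hp
  have hsplitI := TLAux.count_split I p.1 p.2 hbounds.2.1
  have hsplitJ := TLAux.count_split J p.1 p.2 hbounds.2.1
  have haIcc : p.1 ∈ Finset.Icc 1 (2 * n) := Finset.mem_Icc.2 ⟨hbounds.1, by omega⟩
  have hbIcc : p.2 ∈ Finset.Icc 1 (2 * n) := Finset.mem_Icc.2 ⟨by omega, hbounds.2.2⟩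
  have hchara := TLAux.mem_minSet_iff n I hI hbig p.1
  have hcharb := TLAux.mem_minSet_iff n I hI hbig p.2
  rw [← hJdef] at hchara hcharb hbal
  rcases hc p hp with ⟨haI, hbI⟩ | ⟨haI, hbI⟩
  · -- p.1 ∈ I, p.2 ∈ J
    have hbJ : p.2 ∈ J := Finset.mem_sdiff.mpr ⟨hbIcc, hbI⟩
    have haJ : p.1 ∉ J := fun h => (Finset.mem_sdiff.mp h).2 haI
    rw [if_pos haI] at hsplitI
    rw [if_neg haJ] at hsplitJ
    by_cases hcase : TLAux.cnt J p.1 ≤ TLAux.cnt I p.1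
    · refine Or.inl ⟨hchara.mpr (Or.inl ⟨haI, hcase⟩), ?_⟩
      intro hmem
      rcases hcharb.mp hmem with ⟨h1, _⟩ | ⟨_, h2⟩
      · exact hbI h1
      · omega
    · refine Or.inr ⟨?_, hcharb.mpr (Or.inr ⟨hbJ, by omega⟩)⟩
      intro hmem
      rcases hchara.mp hmem with ⟨_, h2⟩ | ⟨h1, _⟩
      · exact hcase h2
      · exact haJ h1
  · -- p.1 ∈ J, p.2 ∈ I
    have haJ : p.1 ∈ J := Finset.mem_sdiff.mpr ⟨haIcc, haI⟩
    have hbJ : p.2 ∉ J := fun h => (Finset.mem_sdiff.mp h).2 hbI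
    rw [if_neg haI] at hsplitI
    rw [if_pos haJ] at hsplitJ
    by_cases hcase : TLAux.cnt I p.1 ≤ TLAux.cnt J p.1
    · refine Or.inl ⟨hchara.mpr (Or.inr ⟨haJ, hcase⟩), ?_⟩
      intro hmem
      rcases hcharb.mp hmem with ⟨_, h2⟩ | ⟨h1, _⟩
      · omega
      · exact hbJ h1
    · refine Or.inr ⟨?_, hcharb.mpr (Or.inl ⟨hbI, by omega⟩)⟩
      intro hmem
      rcases hchara.mp hmem with ⟨h1, _⟩ | ⟨_, h2⟩
      · exact haI h1
      · exact hcase h2
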